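/- If a directed multigraph is infinitely connected (strongly connected and remains strongly connected after removal of any finite set of edges), then it is Eulerian in the sense that for any finite set of edges there exists a circuit passing through each of those edges. -/

import Mathlib

/-- A directed multigraph. -/
structure MultiDigraph where
  V : Type
  E : Type
  src : E → V
  tgt : E → V

/-- `IsWalk G u es v`: the list of edges `es` forms a walk from `u` to `v`. -/
def MultiDigraph.IsWalk (G : MultiDigraph) : G.V → List G.E → G.V → Prop
  | u, [], v => u = v
  | u, e :: es, v => G.src e = u ∧ G.IsWalk (G.tgt e) es v

/-- `G` is strongly connected using only edges outside `S`. -/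
def MultiDigraph.StronglyConnectedAvoiding (G : MultiDigraph) (S : Set G.E) : Prop :=
  ∀ u v : G.V, ∃ es : List G.E, G.IsWalk u es v ∧ ∀ e ∈ es, e ∉ S

/-- `G` is strongly connected and remains so after removal of any finite set of edges. -/
def MultiDigraph.InfinitelyConnected (G : MultiDigraph) : Prop :=
  G.StronglyConnectedAvoiding ∅ ∧ ∀ S : Set G.E, S.Finite → G.StronglyConnectedAvoiding S

/-- `G` is Eulerian: for every finite set `S` of edges, there is a circuit
(a closed trail, i.e. no edge repeated) passing through each edge of `S`. -/
def MultiDigraph.IsEulerian (G : MultiDigraph) : Prop :=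
  ∀ S : Set G.E, S.Finite →
    ∃ (u : G.V) (es : List G.E), G.IsWalk u es u ∧ es.Nodup ∧ ∀ e ∈ S, e ∈ es

lemma MultiDigraph.isWalk_append (G : MultiDigraph) (a b : List G.E) (u v : G.V) :
    G.IsWalk u (a ++ b) v ↔ ∃ m, G.IsWalk u a m ∧ G.IsWalk m b v := by
  induction a generalizing u with
  | nil =>
    constructor
    · exact fun hb => ⟨u, rfl, hb⟩
    · rintro ⟨m, rfl, hb⟩; exact hb
  | cons e a ih =>
    constructor
    · rintro ⟨hs, hw⟩
      obtain ⟨m, h1, h2⟩ := (ih (G.tgt e)).mp hw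
      exact ⟨m, ⟨hs, h1⟩, h2⟩
    · rintro ⟨m, ⟨hs, h1⟩, h2⟩
      exact ⟨hs, (ih (G.tgt e)).mpr ⟨m, h1, h2⟩⟩

/-- Every walk contains a trail with the same endpoints. -/
lemma MultiDigraph.exists_trail (G : MultiDigraph) :
    ∀ (es : List G.E) (u v : G.V), G.IsWalk u es v →
      ∃ t : List G.E, G.IsWalk u t v ∧ t.Nodup ∧ ∀ e ∈ t, e ∈ es := by
  intro es
  induction es with
  | nil => intro u v hw; exact ⟨[], hw, List.nodup_nil, by simp⟩
  | cons e es ih =>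
    intro u v hw
    obtain ⟨hs, hw'⟩ := hw
    obtain ⟨t, ht, htn, hts⟩ := ih (G.tgt e) v hw'
    by_cases he : e ∈ t
    · obtain ⟨t1, t2, rfl⟩ := List.append_of_mem he
      rw [G.isWalk_append] at ht
      obtain ⟨m, h1, hs', h2⟩ := ht
      have hnd2 : (e :: t2).Nodup := (List.nodup_append.mp htn).2.1
      refine ⟨e :: t2, ⟨hs, h2⟩, hnd2, ?_⟩
      intro x hx
      rcases List.mem_cons.mp hx with rfl | hx
      · exact List.mem_cons_self
      · exact List.mem_cons_of_mem _ (hts x (by simp [hx]))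
    · refine ⟨e :: t, ⟨hs, ht⟩, htn.cons he, ?_⟩
      intro x hx
      rcases List.mem_cons.mp hx with rfl | hx
      · exact List.mem_cons_self
      · exact List.mem_cons_of_mem _ (hts x hx)

/-- Key lemma: a trail through all edges of `l`, avoiding `F`. -/
lemma MultiDigraph.key (G : MultiDigraph) (h : G.InfinitelyConnected) :
    ∀ (l : List G.E), l.Nodup → ∀ (F : Set G.E), F.Finite → (∀ e ∈ l, e ∉ F) →
      ∀ w : G.V, ∃ (es : List G.E) (v : G.V), G.IsWalk w es v ∧ es.Nodup ∧
        (∀ e ∈ l, e ∈ es) ∧ (∀ e ∈ es, e ∉ F) := by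
  intro l
  induction l with
  | nil =>
    intro _ F _ _ w
    exact ⟨[], w, rfl, List.nodup_nil, by simp, by simp⟩
  | cons e l ih =>
    intro hnd F hF hdisj w
    have hF' : (F ∪ {e} ∪ {x | x ∈ l}).Finite :=
      (hF.union (Set.finite_singleton e)).union (l.finite_toSet)
    obtain ⟨p, hp, hpav⟩ := (h.2 _ hF') w (G.src e)
    obtain ⟨t, ht, htn, hts⟩ := G.exists_trail p w (G.src e) hp
    have htav : ∀ x ∈ t, x ∉ F ∪ {e} ∪ {x | x ∈ l} := fun x hx => hpav x (hts x hx)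
    have hF2 : (F ∪ {e} ∪ {x | x ∈ t}).Finite :=
      (hF.union (Set.finite_singleton e)).union (t.finite_toSet)
    have hldisj : ∀ x ∈ l, x ∉ F ∪ {e} ∪ {x | x ∈ t} := by
      intro x hx
      simp only [Set.mem_union, Set.mem_singleton_iff, Set.mem_setOf_eq, not_or]
      refine ⟨⟨hdisj x (List.mem_cons_of_mem _ hx), ?_⟩, ?_⟩
      · rintro rfl; exact (List.nodup_cons.mp hnd).1 hx
      · intro hxt
        exact htav x hxt (by simp [hx])
    obtain ⟨es2, v, hw2, hn2, hc2, hav2⟩ :=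
      ih (List.nodup_cons.mp hnd).2 _ hF2 hldisj (G.tgt e)
    refine ⟨t ++ e :: es2, v, ?_, ?_, ?_, ?_⟩
    · rw [G.isWalk_append]
      exact ⟨G.src e, ht, rfl, hw2⟩
    · rw [List.nodup_append']
      refine ⟨htn, ?_, ?_⟩
      · refine hn2.cons ?_
        intro hmem
        exact hav2 e hmem (by simp)
      · intro x hxt hxc
        rcases List.mem_cons.mp hxc with rfl | hxc
        · exact htav x hxt (by simp)
        · exact hav2 x hxc (by simp [hxt])
    · intro x hx
      rcases List.mem_cons.mp hx with rfl | hx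
      · simp
      · simp [hc2 x hx]
    · intro x hx
      rw [List.mem_append] at hx
      rcases hx with hx | hx
      · exact fun hxF => htav x hx (by simp [hxF])
      · rcases List.mem_cons.mp hx with rfl | hx
        · exact hdisj x List.mem_cons_self
        · exact fun hxF => hav2 x hx (by simp [hxF])

/-- An infinitely connected directed multigraph is Eulerian. -/
theorem infinitelyConnected_isEulerian (G : MultiDigraph) [Nonempty G.V]
    (h : G.InfinitelyConnected) : G.IsEulerian := by
  intro S hS
  obtain ⟨w⟩ := ‹Nonempty G.V›
  set l := hS.toFinset.toList with hl
  have hlnd : l.Nodup := Finset.nodup_toList _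
  have hmem : ∀ e, e ∈ S ↔ e ∈ l := by
    intro e; rw [hl, Finset.mem_toList, Set.Finite.mem_toFinset]
  obtain ⟨es, v, hw, hnd, hc, -⟩ :=
    G.key h l hlnd ∅ Set.finite_empty (by simp) w
  obtain ⟨p, hp, hpav⟩ := (h.2 {x | x ∈ es} es.finite_toSet) v w
  obtain ⟨t, ht, htn, hts⟩ := G.exists_trail p v w hp
  refine ⟨w, es ++ t, ?_, ?_, ?_⟩
  · rw [G.isWalk_append]; exact ⟨v, hw, ht⟩
  · rw [List.nodup_append']
    exact ⟨hnd, htn, fun x hx1 hx2 => hpav x (hts x hx2) hx1⟩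
  · intro e he
    exact List.mem_append_left _ (hc e ((hmem e).mp he))
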